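/- arXiv:1109.0715 — 3 statements merged into one kernel-verified Lean document; each statement's English description precedes it below -/
import Mathlib

section
/- The shuffle algebra S = ℂ⟨ξ_0,ξ_1⟩ decomposes as a polynomial algebra S = S^0[ξ_0] over the subalgebra S^0 = ℂ∅ ⊕ Sξ_1 of words ending in ξ_1; that is, every element of S can be written uniquely as a finite sum Σ_j w_j ⧢ ξ_0^{⧢j} with w_j ∈ S^0. -/
noncomputable section
open scoped BigOperators

/-- The shuffle product of two words (letters: `false` = ξ_0, `true` = ξ_1),
as a formal ℂ-linear combination of words. -/
def sh : List Bool → List Bool → (List Bool →₀ ℂ)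
  | [], w => Finsupp.single w 1
  | a :: w1, [] => Finsupp.single (a :: w1) 1
  | a :: w1, b :: w2 =>
      (sh w1 (b :: w2)).mapDomain (a :: ·) + (sh (a :: w1) w2).mapDomain (b :: ·)
  termination_by w1 w2 => w1.length + w2.length

/-- The bilinear extension of the shuffle product to S = ℂ⟨ξ_0,ξ_1⟩. -/
def shProd (f g : List Bool →₀ ℂ) : List Bool →₀ ℂ :=
  f.sum fun u cu => g.sum fun v cv => (cu * cv) • sh u v

/-- Iterated shuffle powers. -/
def shPow (f : List Bool →₀ ℂ) : ℕ → (List Bool →₀ ℂ)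
  | 0 => Finsupp.single [] 1
  | n + 1 => shProd f (shPow f n)

/-- The set of words spanning S^0: the empty word and the words ending with ξ_1. -/
def S0words : Set (List Bool) := {l | l = [] ∨ l.getLast? = some true}

/-- The set of words spanning S^{10}: the empty word and the words beginning
with ξ_0 and ending with ξ_1. -/
def S10words : Set (List Bool) :=
  {l | l = [] ∨ (l.head? = some false ∧ l.getLast? = some true)}

/-- The subspace S^0 = ℂ∅ ⊕ Sξ_1 of the shuffle algebra. -/
def S0 : Submodule ℂ (List Bool →₀ ℂ) := Finsupp.supported ℂ ℂ S0words

/-- The subspace S^{10} = ℂ∅ ⊕ ξ_0Sξ_1 of the shuffle algebra. -/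
def S10 : Submodule ℂ (List Bool →₀ ℂ) := Finsupp.supported ℂ ℂ S10words

lemma sh_nil_right (u : List Bool) : sh u [] = Finsupp.single u 1 := by
  cases u <;> simp [sh]
lemma sh_nil_left (u : List Bool) : sh [] u = Finsupp.single u 1 := by
  cases u <;> simp [sh]

lemma sh_length : ∀ u v : List Bool, ∀ l ∈ (sh u v).support, l.length = u.length + v.length := by
  intro u v
  induction u, v using sh.induct with
  | case1 w => simp [sh, Finsupp.support_single_ne_zero]
  | case2 a w1 => simp [sh, Finsupp.support_single_ne_zero]
  | case3 a w1 b w2 ih1 ih2 =>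
    intro l hl
    rw [sh] at hl
    rcases Finset.mem_union.1 (Finsupp.support_add hl) with h | h <;>
      rcases Finset.mem_image.1 (Finsupp.mapDomain_support h) with ⟨x, hx, rfl⟩
    · simpa [ih1 x hx] using by omega
    · simpa [ih2 x hx] using by omega

lemma sh_apply_ne (u v l : List Bool) (h : l.length ≠ u.length + v.length) :
    (sh u v) l = 0 := by
  by_contra hc
  exact h (sh_length u v l (Finsupp.mem_support_iff.2 hc))

lemma mapDomain_cons_apply (a b : Bool) (f : List Bool →₀ ℂ) (l : List Bool) :
    (f.mapDomain (a :: ·)) (b :: l) = if b = a then f l else 0 := by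
  rcases eq_or_ne b a with rfl | hb
  · simp [Finsupp.mapDomain_apply List.cons_injective]
  · rw [if_neg hb]
    apply Finsupp.mapDomain_notin_range
    rintro ⟨x, hx⟩
    exact hb (by injection hx with h1 h2; exact h1.symm)

lemma mapDomain_cons_apply_nil (a : Bool) (f : List Bool →₀ ℂ) :
    (f.mapDomain (a :: ·)) [] = 0 := by
  apply Finsupp.mapDomain_notin_range; rintro ⟨x, hx⟩; cases hx

lemma sh_rep_apply : ∀ n : ℕ, ∀ (w : List Bool) (k : ℕ) (u₀ : List Bool),
    w.length + k ≤ n → (w = [] ∨ w.getLast? = some true) →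
    (sh w (List.replicate k false)) (u₀ ++ List.replicate k false)
      = if u₀ = w then 1 else 0 := by
  intro n
  induction n with
  | zero =>
    intro w k u₀ h hw
    obtain rfl : w = [] := List.length_eq_zero_iff.1 (by omega)
    obtain rfl : k = 0 := by omega
    simp [sh_nil_left, Finsupp.single_apply, eq_comm]
  | succ n ih =>
    rintro w k u₀ hle hw
    match w, k with
    | [], k =>
      rw [sh_nil_left, Finsupp.single_apply]
      by_cases h : u₀ = []
      · simp [h]
      · rw [if_neg h, if_neg]
        intro hc
        apply h
        have hlen := congrArg List.length hc
        rw [List.length_append, List.length_replicate] at hlen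
        exact List.length_eq_zero_iff.1 (by omega)
    | a :: w1, 0 =>
      simp [sh_nil_right, Finsupp.single_apply, eq_comm]
    | a :: w1, (j+1) =>
      have hlast : (a :: w1).getLast? = some true := by
        rcases hw with h | h
        · exact absurd h (by simp)
        · exact h
      have hw1 : w1 = [] ∨ w1.getLast? = some true := by
        cases w1 with
        | nil => exact Or.inl rfl
        | cons c w2 => exact Or.inr (by rwa [List.getLast?_cons_cons] at hlast)
      rw [List.replicate_succ, sh]
      cases u₀ with
      | nil =>
        simp only [List.nil_append, Finsupp.add_apply]
        rw [mapDomain_cons_apply, mapDomain_cons_apply]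
        have h1 : (sh w1 (false :: List.replicate j false)) (List.replicate j false) = 0 := by
          apply sh_apply_ne
          simp only [List.length_replicate, List.length_cons]
          omega
        have h2 : (sh (a :: w1) (List.replicate j false)) (List.replicate j false) = 0 := by
          apply sh_apply_ne
          simp only [List.length_replicate, List.length_cons]
          omega
        simp [h1, h2]
      | cons b u₀' =>
        simp only [List.cons_append, Finsupp.add_apply]
        rw [mapDomain_cons_apply, mapDomain_cons_apply]
        have hlen : w1.length + (j + 1) ≤ n := by simp at hle; omega
        have t1 : (sh w1 (List.replicate (j+1) false)) (u₀' ++ List.replicate (j+1) false)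
            = if u₀' = w1 then 1 else 0 := ih w1 (j+1) u₀' hlen hw1
        have t2 : (sh (a :: w1) (List.replicate j false)) (u₀' ++ List.replicate (j+1) false)
            = 0 := by
          have : u₀' ++ List.replicate (j+1) false
              = (u₀' ++ [false]) ++ List.replicate j false := by
            simp [List.replicate_succ]
          rw [this, ih (a :: w1) j (u₀' ++ [false]) (by simp at hle ⊢; omega) hw]
          have : u₀' ++ [false] ≠ a :: w1 := by
            intro h
            have := congrArg List.getLast? h
            rw [hlast] at this
            simp at this
          simp [this]
        rw [List.replicate_succ] at t1 t2
        rw [t1, t2]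
        by_cases hba : b = a <;> by_cases hu : u₀' = w1 <;>
          simp [hba, hu, List.cons.injEq]

def tzf (l : List Bool) : ℕ := (l.reverse.takeWhile (· = false)).length
def bodyf (l : List Bool) : List Bool := (l.reverse.dropWhile (· = false)).reverse

lemma bodyf_append (l : List Bool) : bodyf l ++ List.replicate (tzf l) false = l := by
  have h1 : (l.reverse.takeWhile (· = false)).reverse = List.replicate (tzf l) false := by
    rw [List.eq_replicate_iff]
    constructor
    · simp [tzf]
    · intro b hb
      rw [List.mem_reverse] at hb
      simpa using List.mem_takeWhile_imp hb
  have := congrArg List.reverse (List.takeWhile_append_dropWhile (p := (· = false)) (l := l.reverse))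
  rw [List.reverse_append, List.reverse_reverse] at this
  rw [bodyf, ← h1, this]

lemma bodyf_mem (l : List Bool) : bodyf l = [] ∨ (bodyf l).getLast? = some true := by
  rcases h : (l.reverse.dropWhile (· = false)) with _ | ⟨x, xs⟩
  · left; rw [bodyf, h, List.reverse_nil]
  · right
    have hx := List.head?_dropWhile_not (· = false) l.reverse
    rw [h] at hx
    simp only [List.head?_cons] at hx
    have hxt : x = true := by revert hx; cases x <;> simp
    subst hxt
    rw [bodyf, h, List.getLast?_eq_head?_reverse, List.reverse_reverse, List.head?_cons]

lemma exists_decomp_of_le_tzf {k : ℕ} {l : List Bool} (h : k ≤ tzf l) :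
    ∃ l₀, l = l₀ ++ List.replicate k false := by
  refine ⟨bodyf l ++ List.replicate (tzf l - k) false, ?_⟩
  conv_lhs => rw [← bodyf_append l]
  rw [List.append_assoc, ← List.replicate_add]
  congr 2
  omega

lemma shProd_single_single (u v : List Bool) (c d : ℂ) :
    shProd (Finsupp.single u c) (Finsupp.single v d) = (c * d) • sh u v := by
  unfold shProd
  rw [Finsupp.sum_single_index, Finsupp.sum_single_index]
  · simp
  · rw [Finsupp.sum_single_index] <;> simp

lemma shProd_zero_left (g : List Bool →₀ ℂ) : shProd 0 g = 0 := by
  simp [shProd]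

lemma shProd_add_left (f f' g : List Bool →₀ ℂ) :
    shProd (f + f') g = shProd f g + shProd f' g := by
  unfold shProd
  apply Finsupp.sum_add_index'
  · intro u; simp
  · intro u c c'
    rw [← Finsupp.sum_add]
    congr 1; ext v cv
    rw [add_mul, add_smul]

lemma shProd_smul_left (c : ℂ) (f g : List Bool →₀ ℂ) :
    shProd (c • f) g = c • shProd f g := by
  unfold shProd
  rw [Finsupp.sum_smul_index', Finsupp.smul_sum]
  · apply Finsupp.sum_congr
    intro u _
    rw [Finsupp.smul_sum]
    apply Finsupp.sum_congr
    intro v _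
    rw [smul_smul]; congr 1; simp only [smul_eq_mul]; ring
  · intro u; simp

lemma shProd_smul_right (c : ℂ) (f g : List Bool →₀ ℂ) :
    shProd f (c • g) = c • shProd f g := by
  unfold shProd
  rw [Finsupp.smul_sum]
  apply Finsupp.sum_congr
  intro u _
  rw [Finsupp.sum_smul_index', Finsupp.smul_sum]
  · apply Finsupp.sum_congr
    intro v _
    rw [smul_smul]; congr 1; simp only [smul_eq_mul]; ring
  · intro v; simp

lemma shProd_add_right (f g g' : List Bool →₀ ℂ) :
    shProd f (g + g') = shProd f g + shProd f g' := by
  unfold shProd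
  rw [← Finsupp.sum_add]
  apply Finsupp.sum_congr
  intro u _
  apply Finsupp.sum_add_index'
  · intro v; simp
  · intro v c c'; rw [mul_add, add_smul]

lemma sh_false_rep (n : ℕ) :
    sh [false] (List.replicate n false)
      = ((n : ℂ) + 1) • Finsupp.single (List.replicate (n+1) false) 1 := by
  induction n with
  | zero => simp [sh_nil_right]
  | succ n ih =>
    rw [List.replicate_succ, sh, sh_nil_left, ih]
    rw [Finsupp.mapDomain_smul, Finsupp.mapDomain_single, Finsupp.mapDomain_single]
    simp only [← List.replicate_succ]
    push_cast
    module

lemma shPow_eq (j : ℕ) :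
    shPow (Finsupp.single [false] 1) j
      = ((j.factorial : ℂ)) • Finsupp.single (List.replicate j false) 1 := by
  induction j with
  | zero => simp [shPow]
  | succ j ih =>
    rw [shPow, ih, shProd_smul_right, shProd_single_single, one_mul, one_smul,
      sh_false_rep, smul_smul, Nat.factorial_succ]
    push_cast
    ring_nf

def dw (l : List Bool) : List Bool →₀ ℂ :=
  if l.getLast? = some false then Finsupp.single l.dropLast 1 else 0

def Dmap : (List Bool →₀ ℂ) →ₗ[ℂ] (List Bool →₀ ℂ) := Finsupp.linearCombination ℂ dw

lemma Dmap_single (l : List Bool) (c : ℂ) : Dmap (Finsupp.single l c) = c • dw l := by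
  rw [Dmap, Finsupp.linearCombination_single]

lemma dw_cons (a : Bool) (l : List Bool) (hl : l ≠ []) :
    dw (a :: l) = (dw l).mapDomain (a :: ·) := by
  obtain ⟨c, l', rfl⟩ : ∃ c l', l = c :: l' := by
    cases l with
    | nil => exact absurd rfl hl
    | cons c l' => exact ⟨c, l', rfl⟩
  rw [dw, dw, List.getLast?_cons_cons]
  split
  · rw [List.dropLast_cons₂, Finsupp.mapDomain_single]
  · rw [Finsupp.mapDomain_zero]

lemma Dmap_mapDomain' (a : Bool) (f : List Bool →₀ ℂ) :
    Dmap (f.mapDomain (a :: ·))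
      = (Dmap f).mapDomain (a :: ·)
        + (if a = false then (f []) • Finsupp.single ([] : List Bool) 1 else 0) := by
  induction f using Finsupp.induction_linear with
  | zero => simp
  | add f g hf hg =>
    rw [Finsupp.mapDomain_add, map_add, hf, hg, map_add, Finsupp.mapDomain_add]
    rw [Finsupp.add_apply]
    split
    · rw [add_smul]; abel
    · abel
  | single l c =>
    rw [Finsupp.mapDomain_single, Dmap_single, Dmap_single]
    cases l with
    | nil =>
      rw [dw, dw]
      simp only [List.getLast?_singleton, List.dropLast_singleton, Finsupp.single_eq_same,
        List.getLast?_nil]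
      by_cases ha : a = false
      · subst ha; simp
      · simp [ha, Option.some_inj, fun h => ha (by simpa using h)]
    | cons c' l' =>
      rw [dw_cons a _ (by simp), Finsupp.mapDomain_smul]
      simp

lemma Dmap_mapDomain (a : Bool) (f : List Bool →₀ ℂ) (hf : f [] = 0) :
    Dmap (f.mapDomain (a :: ·)) = (Dmap f).mapDomain (a :: ·) := by
  rw [Dmap_mapDomain', hf]
  split <;> simp

lemma sh_cons (a b : Bool) (x y : List Bool) :
    sh (a :: x) (b :: y)
      = (sh x (b :: y)).mapDomain (a :: ·) + (sh (a :: x) y).mapDomain (b :: ·) := by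
  rw [sh]

lemma Dsh : ∀ u v : List Bool,
    Dmap (sh u v)
      = (if u.getLast? = some false then sh u.dropLast v else 0)
        + (if v.getLast? = some false then sh u v.dropLast else 0) := by
  intro u v
  induction u, v using sh.induct with
  | case1 w =>
    rw [sh_nil_left, Dmap_single, one_smul, dw]
    have h : ¬ ([] : List Bool).getLast? = some false := by simp
    rw [if_neg h, zero_add]
    split
    · rw [sh_nil_left]
    · rfl
  | case2 a w1 =>
    rw [sh_nil_right, Dmap_single, one_smul, dw]
    have h : ¬ ([] : List Bool).getLast? = some false := by simp
    rw [if_neg h, add_zero]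
    split
    · rw [sh_nil_right]
    · rfl
  | case3 a w1 b w2 ih1 ih2 =>
    have h1 : (sh w1 (b :: w2)) [] = 0 := sh_apply_ne _ _ _ (by simp only [List.length_nil, List.length_cons]; omega)
    have h2 : (sh (a :: w1) w2) [] = 0 := sh_apply_ne _ _ _ (by simp only [List.length_nil, List.length_cons]; omega)
    rw [sh, map_add, Dmap_mapDomain _ _ h1, Dmap_mapDomain _ _ h2, ih1, ih2,
      Finsupp.mapDomain_add, Finsupp.mapDomain_add]
    simp only [apply_ite (Finsupp.mapDomain (fun x => a :: x)),
      apply_ite (Finsupp.mapDomain (fun x => b :: x)), Finsupp.mapDomain_zero]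
    cases w1 with
    | nil =>
      cases w2 with
      | nil =>
        by_cases ha : a = false <;> by_cases hb : b = false <;>
          simp [ha, hb, sh_nil_left, sh_nil_right, sh_cons] <;> abel
      | cons c2 w2' =>
        by_cases ha : a = false <;> by_cases hq : (c2 :: w2').getLast? = some false <;>
          simp [ha, hq, List.getLast?_cons_cons, List.dropLast_cons₂,
            sh_nil_left, sh_nil_right, sh_cons] <;> abel
    | cons c1 w1' =>
      cases w2 with
      | nil =>
        by_cases hp : (c1 :: w1').getLast? = some false <;> by_cases hb : b = false <;>
          simp [hp, hb, List.getLast?_cons_cons, List.dropLast_cons₂,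
            sh_nil_left, sh_nil_right, sh_cons] <;> abel
      | cons c2 w2' =>
        by_cases hp : (c1 :: w1').getLast? = some false <;>
          by_cases hq : (c2 :: w2').getLast? = some false <;>
          simp [hp, hq, List.getLast?_cons_cons, List.dropLast_cons₂,
            sh_nil_left, sh_nil_right, sh_cons] <;> abel

lemma E_zero (f : List Bool →₀ ℂ) : shProd f (shPow (Finsupp.single [false] 1) 0) = f := by
  show shProd f (Finsupp.single [] 1) = f
  unfold shProd
  conv_rhs => rw [← Finsupp.sum_single f]
  apply Finsupp.sum_congr
  intro u _
  rw [Finsupp.sum_single_index (by simp), mul_one, sh_nil_right, Finsupp.smul_single', mul_one]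

lemma shProd_single_right (f : List Bool →₀ ℂ) (v : List Bool) :
    shProd f (Finsupp.single v 1) = f.sum fun u c => c • sh u v := by
  unfold shProd
  apply Finsupp.sum_congr
  intro u _
  rw [Finsupp.sum_single_index (by simp), mul_one]

lemma Dmap_S0 (f : List Bool →₀ ℂ)
    (hf : ∀ x ∈ f.support, x = [] ∨ x.getLast? = some true) : Dmap f = 0 := by
  rw [Dmap, Finsupp.linearCombination_apply, Finsupp.sum]
  apply Finset.sum_eq_zero
  intro l hl
  have hdw : dw l = 0 := by
    rw [dw, if_neg]
    rcases hf l hl with rfl | h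
    · simp
    · rw [h]; simp
  rw [hdw, smul_zero]

lemma Dmap_shProd_rep (f : List Bool →₀ ℂ)
    (hf : ∀ x ∈ f.support, x = [] ∨ x.getLast? = some true)
    (v : List Bool) (hv : v.getLast? = some false) :
    Dmap (shProd f (Finsupp.single v 1)) = shProd f (Finsupp.single v.dropLast 1) := by
  rw [shProd_single_right, shProd_single_right, map_finsuppSum]
  apply Finsupp.sum_congr
  intro u hu
  rw [map_smul, Dsh, hv, if_pos rfl, if_neg, zero_add]
  rcases hf u hu with rfl | h
  · simp
  · rw [h]; simp

lemma getLast?_rep (j : ℕ) : (List.replicate (j+1) false).getLast? = some false := by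
  rw [List.replicate_succ']
  exact List.getLast?_concat

lemma Dmap_E_succ (f : List Bool →₀ ℂ)
    (hf : ∀ x ∈ f.support, x = [] ∨ x.getLast? = some true) (j : ℕ) :
    Dmap (shProd f (shPow (Finsupp.single [false] 1) (j+1)))
      = ((j+1 : ℕ) : ℂ) • shProd f (shPow (Finsupp.single [false] 1) j) := by
  rw [shPow_eq (j+1), shProd_smul_right, map_smul,
    Dmap_shProd_rep f hf _ (getLast?_rep j), List.dropLast_replicate,
    Nat.add_sub_cancel, shPow_eq j, shProd_smul_right, smul_smul, Nat.factorial_succ]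
  push_cast
  module

lemma Dmap_pow (f : List Bool →₀ ℂ)
    (hf : ∀ x ∈ f.support, x = [] ∨ x.getLast? = some true) :
    ∀ (m j : ℕ), (Dmap ^ m) (shProd f (shPow (Finsupp.single [false] 1) j))
      = ((j.descFactorial m : ℕ) : ℂ) • shProd f (shPow (Finsupp.single [false] 1) (j - m)) := by
  intro m
  induction m with
  | zero => intro j; simp
  | succ m ih =>
    intro j
    rw [pow_succ, Module.End.mul_apply]
    cases j with
    | zero =>
      rw [E_zero, Dmap_S0 f hf, map_zero, Nat.descFactorial_eq_zero_iff_lt.2 (by omega)]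
      simp
    | succ j =>
      rw [Dmap_E_succ f hf, map_smul, ih j, Nat.succ_sub_succ, Nat.succ_descFactorial_succ,
        smul_smul]
      push_cast
      ring_nf

def Csub : Submodule ℂ (ℕ →₀ (List Bool →₀ ℂ)) where
  carrier := {c | ∀ j, c j ∈ S0}
  add_mem' := fun hc hd j => by rw [Finsupp.add_apply]; exact add_mem (hc j) (hd j)
  zero_mem' := fun j => by rw [Finsupp.zero_apply]; exact zero_mem _
  smul_mem' := fun r c hc j => by rw [Finsupp.smul_apply]; exact Submodule.smul_mem _ _ (hc j)

lemma mem_Csub {c : ℕ →₀ (List Bool →₀ ℂ)} : c ∈ Csub ↔ ∀ j, c j ∈ S0 := Iff.rfl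

def Tlin : (ℕ →₀ (List Bool →₀ ℂ)) →ₗ[ℂ] (List Bool →₀ ℂ) :=
  Finsupp.lsum ℂ fun j =>
    { toFun := fun w => shProd w (shPow (Finsupp.single [false] 1) j)
      map_add' := fun f f' => shProd_add_left f f' _
      map_smul' := fun c f => shProd_smul_left c f _ }

lemma Tlin_apply (c : ℕ →₀ (List Bool →₀ ℂ)) :
    Tlin c = c.sum fun j w => shProd w (shPow (Finsupp.single [false] 1) j) := rfl

def Mset : Submodule ℂ (List Bool →₀ ℂ) := Csub.map Tlin

lemma sum_single_smul (f : List Bool →₀ ℂ) :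
    f = f.sum fun x c => c • Finsupp.single x 1 := by
  conv_lhs => rw [← Finsupp.sum_single f]
  apply Finsupp.sum_congr
  intro x _
  rw [Finsupp.smul_single', mul_one]

lemma mem_S0_single {w : List Bool} (hw : w = [] ∨ w.getLast? = some true) (c : ℂ) :
    Finsupp.single w c ∈ S0 := by
  rw [S0, Finsupp.mem_supported]
  intro x hx
  rw [Finset.mem_coe, Finsupp.mem_support_iff, Finsupp.single_apply] at hx
  have : w = x := by by_contra h; rw [if_neg h] at hx; exact hx rfl
  subst this
  exact hw

lemma single_mem_M : ∀ (k : ℕ) (l : List Bool), tzf l = k → Finsupp.single l 1 ∈ Mset := by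
  intro k
  induction k using Nat.strong_induction_on with
  | _ k ih =>
    intro l hk
    have hwS := bodyf_mem l
    have hl : bodyf l ++ List.replicate k false = l := by rw [← hk]; exact bodyf_append l
    set w := bodyf l with hwdef
    have hx : shProd (Finsupp.single w 1) (shPow (Finsupp.single [false] 1) k) ∈ Mset := by
      refine ⟨Finsupp.single k (Finsupp.single w 1), ?_, ?_⟩
      · intro j
        rw [Finsupp.single_apply]
        split
        · exact mem_S0_single hwS 1
        · exact zero_mem _
      · rw [Tlin_apply]
        exact Finsupp.sum_single_index (shProd_zero_left _)
    have hval : shProd (Finsupp.single w 1) (shPow (Finsupp.single [false] 1) k)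
        = (k.factorial : ℂ) • sh w (List.replicate k false) := by
      rw [shPow_eq, shProd_smul_right, shProd_single_single]
      norm_num
    set r := sh w (List.replicate k false) - Finsupp.single l 1 with hrdef
    have hr0 : ∀ x, k ≤ tzf x → r x = 0 := by
      intro x hx
      obtain ⟨x₀, rfl⟩ := exists_decomp_of_le_tzf hx
      rw [hrdef, Finsupp.sub_apply,
        sh_rep_apply (w.length + k) w k x₀ le_rfl hwS, ← hl, Finsupp.single_apply]
      by_cases h : x₀ = w
      · subst h; rw [if_pos rfl, if_pos rfl, sub_self]
      · rw [if_neg h, if_neg, sub_self]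
        intro hc
        exact h (List.append_left_injective _ hc.symm)
    have hrmem : r ∈ Mset := by
      rw [sum_single_smul r]
      apply Submodule.sum_mem
      intro x hxs
      apply Submodule.smul_mem
      have hlt : tzf x < k := by
        by_contra hge
        rw [Finsupp.mem_support_iff] at hxs
        exact hxs (hr0 x (le_of_not_gt hge))
      exact ih (tzf x) hlt x rfl
    have hfac : (k.factorial : ℂ) ≠ 0 := Nat.cast_ne_zero.2 k.factorial_ne_zero
    have hrepr : Finsupp.single l 1
        = (k.factorial : ℂ)⁻¹ • (shProd (Finsupp.single w 1)
            (shPow (Finsupp.single [false] 1) k)) - r := by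
      rw [hval, smul_smul, inv_mul_cancel₀ hfac, one_smul, hrdef]
      abel
    rw [hrepr]
    exact sub_mem (Submodule.smul_mem _ _ hx) hrmem

lemma mem_M (u : List Bool →₀ ℂ) : u ∈ Mset := by
  rw [sum_single_smul u]
  exact Submodule.sum_mem _ fun x _ => Submodule.smul_mem _ _ (single_mem_M (tzf x) x rfl)

lemma supp_S0 {f : List Bool →₀ ℂ} (hf : f ∈ S0) :
    ∀ x ∈ f.support, x = [] ∨ x.getLast? = some true := by
  intro x hx
  exact (Finsupp.mem_supported ℂ f).1 hf hx

lemma Tlin_inj : ∀ (N : ℕ) (c : ℕ →₀ (List Bool →₀ ℂ)), (∀ j, c j ∈ S0) →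
    (∀ j, N ≤ j → c j = 0) → Tlin c = 0 → c = 0 := by
  intro N
  induction N with
  | zero =>
    intro c _ hb _
    ext j x
    rw [hb j (Nat.zero_le j)]
    rfl
  | succ N ihN =>
    intro c hS hb hT
    have step1 : (Dmap ^ N) (Tlin c)
        = (Dmap ^ N) (shProd (c N) (shPow (Finsupp.single [false] 1) N)) := by
      rw [Tlin_apply, map_finsuppSum, Finsupp.sum]
      apply Finset.sum_eq_single N
      · intro j hj hne
        have hjN : j < N := by
          have : j < N + 1 := by
            by_contra hge
            rw [Finsupp.mem_support_iff] at hj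
            exact hj (hb j (le_of_not_gt hge))
          omega
        rw [Dmap_pow (c j) (supp_S0 (hS j)) N j,
          Nat.descFactorial_eq_zero_iff_lt.2 hjN]
        simp
      · intro hN
        rw [Finsupp.notMem_support_iff.1 hN, shProd_zero_left, map_zero]
    have step2 : (Dmap ^ N) (shProd (c N) (shPow (Finsupp.single [false] 1) N))
        = (N.factorial : ℂ) • c N := by
      rw [Dmap_pow (c N) (supp_S0 (hS N)) N N, Nat.sub_self, E_zero,
        Nat.descFactorial_self]
    have hcN : c N = 0 := by
      have h0 : (N.factorial : ℂ) • c N = 0 := by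
        rw [← step2, ← step1, hT, map_zero]
      have hfac : (N.factorial : ℂ) ≠ 0 := Nat.cast_ne_zero.2 N.factorial_ne_zero
      exact (smul_eq_zero.1 h0).resolve_left hfac
    apply ihN c hS ?_ hT
    intro j hj
    rcases eq_or_lt_of_le hj with rfl | hlt
    · exact hcN
    · exact hb j hlt

theorem shuffle_decomposition_S0' (u : List Bool →₀ ℂ) :
    ∃! c : ℕ →₀ (List Bool →₀ ℂ),
      (∀ j, c j ∈ S0) ∧
      u = c.sum fun j w => shProd w (shPow (Finsupp.single [false] 1) j) := by
  obtain ⟨c, hc, hTc⟩ := mem_M u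
  refine ⟨c, ⟨hc, by rw [← hTc, Tlin_apply]⟩, ?_⟩
  rintro c' ⟨hc', hu'⟩
  have hTc' : Tlin c' = u := by rw [Tlin_apply, ← hu']
  have hdS : ∀ j, (c' - c) j ∈ S0 := fun j => by
    rw [Finsupp.sub_apply]
    exact sub_mem (hc' j) (hc j)
  have hdb : ∀ j, (c' - c).support.sup id + 1 ≤ j → (c' - c) j = 0 := by
    intro j hj
    rw [← Finsupp.notMem_support_iff]
    intro hmem
    have := Finset.le_sup (f := id) hmem
    simp only [id] at this
    omega
  have hdT : Tlin (c' - c) = 0 := by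
    have h := map_sub Tlin c' c
    rw [hTc', hTc, sub_self] at h
    exact h
  have hz : c' - c = 0 := Tlin_inj _ _ hdS hdb hdT
  rw [← sub_eq_zero]
  exact hz

/-- S = S^0[ξ_0] — every element u of the shuffle algebra S
is uniquely a finite sum u = Σ_j w_j ⧢ ξ_0^{⧢j} with w_j ∈ S^0. -/
theorem shuffle_decomposition_S0 (u : List Bool →₀ ℂ) :
    ∃! c : ℕ →₀ (List Bool →₀ ℂ),
      (∀ j, c j ∈ S0) ∧
      u = c.sum fun j w => shProd w (shPow (Finsupp.single [false] 1) j) := by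
  exact shuffle_decomposition_S0' u
end
end

section
/- Landen's formula for the dilogarithm: for real 0 < z < 1 (or z in a suitable domain), Li_2(−z/(1−z)) = −Li_2(z) − (1/2)log²(1−z). -/
noncomputable section

open Set Real intervalIntegral

/-- The dilogarithm Li_2(x) = Σ_{n≥1} x^n/n², extended analytically to x < 1 via the
standard integral representation Li_2(x) = −∫_0^x log(1−t)/t dt. -/
def Li2 (x : ℝ) : ℝ := -∫ t in (0:ℝ)..x, Real.log (1 - t) / t

/-- Continuous extension of `log (1 - t) / t` to `t = 0`. -/
def landenG (t : ℝ) : ℝ := if t = 0 then -1 else Real.log (1 - t) / t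

lemma hasDerivAt_one_sub (x : ℝ) : HasDerivAt (fun y : ℝ => 1 - y) (-1) x := by
  simpa using (hasDerivAt_id x).const_sub (1:ℝ)

lemma landenG_continuousAt {x : ℝ} (hx : x < 1) : ContinuousAt landenG x := by
  rcases eq_or_ne x 0 with rfl | hx0
  · -- continuity at 0 via the derivative of log(1-t)
    have hder : HasDerivAt (fun t : ℝ => Real.log (1 - t)) (-1) 0 := by
      have := (Real.hasDerivAt_log (by norm_num : (1:ℝ) - 0 ≠ 0)).comp 0 (hasDerivAt_one_sub 0)
      simpa [Function.comp_def] using this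
    have hslope := hasDerivAt_iff_tendsto_slope.mp hder
    have h1 : Filter.Tendsto landenG (nhdsWithin 0 {(0:ℝ)}ᶜ) (nhds (-1)) := by
      refine hslope.congr' ?_
      filter_upwards [self_mem_nhdsWithin] with t ht
      simp only [Set.mem_compl_iff, Set.mem_singleton_iff] at ht
      simp [slope, landenG, ht, Real.log_one, div_eq_inv_mul]
    have h2 : Filter.Tendsto landenG (pure (0:ℝ)) (nhds (-1)) := by
      have := tendsto_pure_nhds landenG 0
      simpa [landenG] using this
    have htend : Filter.Tendsto landenG (nhds 0) (nhds (-1)) := by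
      rw [← nhdsNE_sup_pure (0:ℝ)]
      exact h1.sup h2
    have hg0 : landenG 0 = -1 := by simp [landenG]
    simpa [ContinuousAt, hg0] using htend
  · have hcong : ∀ᶠ t in nhds x, landenG t = Real.log (1 - t) / t := by
      filter_upwards [eventually_ne_nhds hx0] with t ht
      simp [landenG, ht]
    have hc : ContinuousAt (fun t => Real.log (1 - t) / t) x := by
      have h1x : (1:ℝ) - x ≠ 0 := by linarith
      exact ((Real.continuousAt_log h1x).comp
        ((continuous_const.sub continuous_id).continuousAt)).div continuousAt_id hx0
    exact hc.congr (Filter.EventuallyEq.symm hcong)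

lemma landenG_continuousOn : ContinuousOn landenG (Iio (1:ℝ)) :=
  fun x hx => (landenG_continuousAt hx).continuousWithinAt

lemma landenG_intervalIntegrable {a b : ℝ} (ha : a < 1) (hb : b < 1) :
    IntervalIntegrable landenG MeasureTheory.volume a b := by
  apply ContinuousOn.intervalIntegrable
  apply landenG_continuousOn.mono
  intro t ht
  simp only [Set.mem_Iio]
  rcases le_total a b with h | h
  · rw [Set.uIcc_of_le h] at ht; exact lt_of_le_of_lt ht.2 hb
  · rw [Set.uIcc_of_ge h] at ht; exact lt_of_le_of_lt ht.2 ha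

lemma Li2_eq_G (x : ℝ) : Li2 x = -∫ t in (0:ℝ)..x, landenG t := by
  unfold Li2
  congr 1
  apply intervalIntegral.integral_congr_ae
  have h0 : ∀ᵐ t : ℝ, t ≠ (0:ℝ) := by
    rw [MeasureTheory.ae_iff]
    simpa using MeasureTheory.measure_singleton (0:ℝ)
  filter_upwards [h0] with t ht _
  simp [landenG, ht]

lemma hasDerivAt_intG {x : ℝ} (hx : x < 1) :
    HasDerivAt (fun y => ∫ t in (0:ℝ)..y, landenG t) (landenG x) x := by
  refine intervalIntegral.integral_hasDerivAt_right
    (landenG_intervalIntegrable (by norm_num) hx) ?_ (landenG_continuousAt hx)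
  exact ContinuousOn.stronglyMeasurableAtFilter isOpen_Iio landenG_continuousOn x hx

/-- Landen's formula — for real 0 < z < 1,
Li_2(−z/(1−z)) = −Li_2(z) − (1/2)·log²(1−z). -/
theorem landen_formula (z : ℝ) (h0 : 0 < z) (h1 : z < 1) :
    Li2 (-z / (1 - z)) = -Li2 z - (1 / 2) * (Real.log (1 - z)) ^ 2 := by
  set H : ℝ → ℝ := fun y => ∫ t in (0:ℝ)..y, landenG t with hH
  set u : ℝ → ℝ := fun x => -x / (1 - x) with hu
  set F : ℝ → ℝ := fun x => -(H (u x)) - H x + (1/2) * (Real.log (1 - x))^2 with hF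
  -- key facts about u on [0, z]
  have hu_le : ∀ x ∈ Icc (0:ℝ) z, u x ≤ 0 := by
    intro x hx
    have hx1 : x < 1 := lt_of_le_of_lt hx.2 h1
    have h1x : (0:ℝ) < 1 - x := by linarith
    show -x / (1 - x) ≤ 0
    rw [neg_div, neg_nonpos]
    exact div_nonneg hx.1 h1x.le
  have hderivF : ∀ x ∈ Icc (0:ℝ) z, HasDerivAt F 0 x := by
    intro x hx
    have hx1 : x < 1 := lt_of_le_of_lt hx.2 h1
    have h1x : (0:ℝ) < 1 - x := by linarith
    have hux1 : u x < 1 := lt_of_le_of_lt (hu_le x hx) one_pos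
    -- derivative of u
    have hu' : HasDerivAt u (-(1/(1-x)^2)) x := by
      have hnum : HasDerivAt (fun y : ℝ => -y) (-1) x := (hasDerivAt_id x).neg
      have hd := hnum.div (hasDerivAt_one_sub x) (by linarith : (1:ℝ) - x ≠ 0)
      refine hd.congr_deriv ?_
      ring
    have hH1 : HasDerivAt (fun y => H (u y)) (landenG (u x) * -(1/(1-x)^2)) x :=
      (hasDerivAt_intG hux1).comp x hu'
    have hH2 : HasDerivAt H (landenG x) x := hasDerivAt_intG hx1
    have hlog : HasDerivAt (fun y : ℝ => Real.log (1 - y)) (-(1/(1-x))) x := by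
      have hd := (Real.hasDerivAt_log (ne_of_gt h1x)).comp x (hasDerivAt_one_sub x)
      refine hd.congr_deriv ?_
      ring
    have hsq : HasDerivAt (fun y : ℝ => (1/2) * (Real.log (1 - y))^2)
        ((1/2) * (2 * Real.log (1 - x) * -(1/(1-x)))) x := by
      have := (hlog.pow 2).const_mul (1/2)
      refine this.congr_deriv ?_
      norm_num
    have hFd : HasDerivAt F
        (-(landenG (u x) * -(1/(1-x)^2)) - landenG x + (1/2) * (2 * Real.log (1 - x) * -(1/(1-x)))) x :=
      (hH1.neg.sub hH2).add hsq
    convert hFd using 1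
    rcases eq_or_ne x 0 with rfl | hx0
    · simp [landenG, hu]
    · have hxpos : 0 < x := lt_of_le_of_ne hx.1 (Ne.symm hx0)
      have hux0 : u x ≠ 0 := by
        show -x / (1 - x) ≠ 0
        apply div_ne_zero <;> [linarith; linarith]
      have hgu : landenG (u x) = (1 - x) * Real.log (1 - x) / x := by
        simp only [landenG, if_neg hux0]
        have h1u : 1 - u x = 1 / (1 - x) := by
          show 1 - (-x / (1 - x)) = 1 / (1 - x)
          field_simp
          ring
        rw [h1u, Real.log_div one_ne_zero (ne_of_gt h1x), Real.log_one]
        show (0 - Real.log (1 - x)) / (-x / (1 - x)) = (1 - x) * Real.log (1 - x) / x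
        field_simp
        ring
      have hgx : landenG x = Real.log (1 - x) / x := by simp [landenG, hx0]
      rw [hgu, hgx]
      field_simp
      ring
  have hcont : ContinuousOn F (Icc 0 z) :=
    fun x hx => (hderivF x hx).continuousAt.continuousWithinAt
  have hconst := constant_of_has_deriv_right_zero hcont
    (fun x hx => (hderivF x (Ico_subset_Icc_self hx)).hasDerivWithinAt) z
    (right_mem_Icc.2 (le_of_lt h0))
  have hF0 : F 0 = 0 := by
    simp [hF, hH, hu, intervalIntegral.integral_same, Real.log_one]
  rw [hF0] at hconst
  have hFz : F z = -(H (u z)) - H z + (1/2) * (Real.log (1 - z))^2 := rfl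
  rw [Li2_eq_G, Li2_eq_G]
  have hz0 : -(H (u z)) - H z + (1/2) * (Real.log (1 - z))^2 = 0 := by rw [← hFz]; exact hconst
  have huz : u z = -z / (1 - z) := rfl
  rw [huz] at hz0
  linarith [hz0]
end
end

section
/- The five term relation for dilogarithms holds: for real z_1, z_2 with 0 < z_1, z_2 < 1, Li_2(z_1 z_2) = Li_2(−z_1(1−z_2)/(1−z_1)) + Li_2(−z_2(1−z_1)/(1−z_2)) + Li_2(z_1) + Li_2(z_2) + (1/2)·log²((1−z_1)/(1−z_2)). -/
noncomputable section

open Real MeasureTheory Set Filter Topology intervalIntegral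

/-- continuous extension of the integrand -/
def f2 (t : ℝ) : ℝ := if t = 0 then 1 else -Real.log (1 - t) / t

lemma f2_contAt_zero : ContinuousAt f2 0 := by
  have hlog : HasDerivAt (fun t : ℝ => -Real.log (1 - t)) 1 0 := by
    have h1 : HasDerivAt (fun t : ℝ => 1 - t) (-1) 0 := by
      simpa using (hasDerivAt_id (0:ℝ)).const_sub 1
    have h2 : HasDerivAt (fun t : ℝ => Real.log (1 - t)) (-1) 0 := by
      have := (Real.hasDerivAt_log (by norm_num : (1:ℝ) - 0 ≠ 0)).comp 0 h1
      simpa [Function.comp_def] using this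
    simpa [Pi.neg_def] using h2.neg
  have hslope := hasDerivAt_iff_tendsto_slope.mp hlog
  have heq : ∀ t ∈ ({(0:ℝ)}ᶜ : Set ℝ), slope (fun t : ℝ => -Real.log (1 - t)) 0 t = f2 t := by
    intro t ht
    have ht0 : t ≠ 0 := ht
    simp [slope, f2, ht0, div_eq_inv_mul]
  have h3 : Tendsto f2 (𝓝[≠] 0) (𝓝 1) :=
    hslope.congr' (eventually_nhdsWithin_of_forall heq)
  have : Tendsto f2 (𝓝[≠] 0 ⊔ pure 0) (𝓝 1) := by
    rw [tendsto_sup]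
    exact ⟨h3, by simpa [f2] using tendsto_pure_nhds f2 0⟩
  rw [ContinuousAt]
  have h0 : f2 0 = 1 := by simp [f2]
  rw [h0, ← nhdsNE_sup_pure]
  exact this

lemma f2_contOn : ContinuousOn f2 (Iio 1) := by
  intro x hx
  rcases eq_or_ne x 0 with rfl | hx0
  · exact f2_contAt_zero.continuousWithinAt
  · have : ContinuousAt f2 x := by
      have hev : ∀ᶠ t in 𝓝 x, (-Real.log (1 - t) / t) = f2 t := by
        filter_upwards [isOpen_compl_singleton.mem_nhds hx0] with t ht
        have ht0 : t ≠ 0 := ht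
        simp [f2, ht0]
      have hc : ContinuousAt (fun t : ℝ => -Real.log (1 - t) / t) x := by
        apply ContinuousAt.div
        · exact ((Real.continuousAt_log (by intro h; linarith [hx.out, h] : (1:ℝ) - x ≠ 0)).comp
            (by fun_prop)).neg
        · exact continuousAt_id
        · exact hx0
      exact hc.congr hev
    exact this.continuousWithinAt

lemma Li2_eq (x : ℝ) : Li2 x = ∫ t in (0:ℝ)..x, f2 t := by
  unfold Li2
  rw [← intervalIntegral.integral_neg]
  apply intervalIntegral.integral_congr_ae
  have h0 : ∀ᵐ t : ℝ, t ≠ 0 := by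
    rw [MeasureTheory.ae_iff]
    have h : {a : ℝ | ¬ a ≠ 0} = {0} := by ext t; simp
    rw [h]
    exact Real.volume_singleton
  filter_upwards [h0] with t ht _
  simp [f2, ht, neg_div]

lemma Li2_hasDerivAt {x : ℝ} (hx : x < 1) : HasDerivAt Li2 (f2 x) x := by
  have hsub : uIcc (0:ℝ) x ⊆ Iio 1 := by
    intro t ht
    rw [Set.mem_uIcc] at ht
    rcases ht with ⟨_, h⟩ | ⟨_, h⟩ <;> simp only [Set.mem_Iio] <;> linarith
  have hint : IntervalIntegrable f2 volume 0 x :=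
    (f2_contOn.mono hsub).intervalIntegrable
  have hmeas : StronglyMeasurableAtFilter f2 (𝓝 x) :=
    f2_contOn.stronglyMeasurableAtFilter isOpen_Iio x hx
  have hcont : ContinuousAt f2 x := f2_contOn.continuousAt (isOpen_Iio.mem_nhds hx)
  have key := intervalIntegral.integral_hasDerivAt_right hint hmeas hcont
  have : Li2 = fun u => ∫ t in (0:ℝ)..u, f2 t := funext Li2_eq
  rw [this]
  exact key


lemma Li2_hasDerivAt_ne {x : ℝ} (hx : x < 1) (hx0 : x ≠ 0) :
    HasDerivAt Li2 (-Real.log (1 - x) / x) x := by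
  simpa [f2, hx0] using Li2_hasDerivAt hx

lemma Li2_hasDerivAt_zero : HasDerivAt Li2 1 0 := by
  simpa [f2] using Li2_hasDerivAt (by norm_num : (0:ℝ) < 1)

lemma Li2_zero : Li2 0 = 0 := by simp [Li2]

/-- derivative of the map x ↦ (a + b*x)/(1-x) -/
lemma aux_hasDerivAt (a b x : ℝ) (hx : x ≠ 1) :
    HasDerivAt (fun t : ℝ => (a + b * t) / (1 - t)) ((b + a) / (1 - x) ^ 2) x := by
  have hn : HasDerivAt (fun t : ℝ => a + b * t) b x := by
    simpa using ((hasDerivAt_id x).const_mul b).const_add a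
  have hd : HasDerivAt (fun t : ℝ => 1 - t) (-1) x := by
    simpa using (hasDerivAt_id x).const_sub 1
  have h1x : (1:ℝ) - x ≠ 0 := sub_ne_zero.mpr (Ne.symm hx)
  have := hn.div hd h1x
  refine this.congr_deriv ?_
  field_simp
  ring

lemma logsq_hasDerivAt {x : ℝ} (hx : x < 1) :
    HasDerivAt (fun t : ℝ => (1/2) * (Real.log (1 - t)) ^ 2)
      (Real.log (1 - x) * (-1 / (1 - x))) x := by
  have h1x : (1:ℝ) - x ≠ 0 := by linarith
  have hd : HasDerivAt (fun t : ℝ => 1 - t) (-1) x := by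
    simpa using (hasDerivAt_id x).const_sub 1
  have hlog : HasDerivAt (fun t : ℝ => Real.log (1 - t)) (-1 / (1 - x)) x := by
    have := (Real.hasDerivAt_log h1x).comp x hd
    simpa [div_eq_inv_mul, Function.comp_def] using this
  have := (hlog.pow 2).const_mul (1/2 : ℝ)
  refine this.congr_deriv ?_
  ring

/-- Landen's identity. -/
lemma landen {z : ℝ} (h0 : 0 ≤ z) (h1 : z < 1) :
    Li2 (-z / (1 - z)) + Li2 z + (1/2) * (Real.log (1 - z)) ^ 2 = 0 := by
  set G : ℝ → ℝ := fun t => Li2 (-t / (1 - t)) + Li2 t + (1/2) * (Real.log (1 - t)) ^ 2 with hG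
  have hderiv : ∀ x ∈ Set.Ico (0:ℝ) z, HasDerivAt G 0 x := by
    intro x hx
    obtain ⟨hx0, hxz⟩ := hx
    have hx1 : x < 1 := lt_of_lt_of_le hxz h1.le
    have h1x : (1:ℝ) - x ≠ 0 := by linarith
    have h1x' : (0:ℝ) < 1 - x := by linarith
    -- inner map u
    have hu : HasDerivAt (fun t : ℝ => -t / (1 - t)) ((-1) / (1 - x) ^ 2) x := by
      have := aux_hasDerivAt 0 (-1) x (by linarith)
      simpa using this
    have hux : -x / (1 - x) < 1 := by
      have : -x / (1 - x) ≤ 0 := div_nonpos_of_nonpos_of_nonneg (by linarith) (by linarith)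
      linarith
    rcases eq_or_lt_of_le hx0 with rfl | hx0'
    · -- x = 0
      have hLi1 : HasDerivAt (fun t : ℝ => Li2 (-t / (1 - t))) (1 * ((-1) / (1 - 0) ^ 2)) 0 := by
        have h := Li2_hasDerivAt_zero
        have : (-(0:ℝ) / (1 - 0)) = 0 := by norm_num
        exact HasDerivAt.comp (h₂ := Li2) 0 (by rw [this]; exact h : HasDerivAt Li2 1 (-(0:ℝ) / (1 - 0))) hu
      have htot := (hLi1.add Li2_hasDerivAt_zero).add (logsq_hasDerivAt (by norm_num : (0:ℝ) < 1))
      refine htot.congr_deriv ?_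
      norm_num
    · -- x > 0
      have hne : -x / (1 - x) ≠ 0 := by
        apply div_ne_zero <;> [skip; linarith]
        simp; linarith
      have hlogarg : (1 : ℝ) - (-x / (1 - x)) = (1 - x)⁻¹ := by
        field_simp
        ring
      have hLi1 : HasDerivAt (fun t : ℝ => Li2 (-t / (1 - t)))
          ((-Real.log (1 - (-x / (1 - x))) / (-x / (1 - x))) * ((-1) / (1 - x) ^ 2)) x :=
        HasDerivAt.comp (h₂ := Li2) x (Li2_hasDerivAt_ne hux hne) hu
      have htot := (hLi1.add (Li2_hasDerivAt_ne hx1 (ne_of_gt hx0'))).add (logsq_hasDerivAt hx1)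
      refine htot.congr_deriv ?_
      rw [hlogarg, Real.log_inv]
      field_simp
      ring
  have hcont : ContinuousOn G (Set.Icc 0 z) := by
    intro x hx
    rcases lt_or_eq_of_le hx.2 with h | rfl
    · exact (hderiv x ⟨hx.1, h⟩).continuousAt.continuousWithinAt
    · -- x = z : continuity at z directly
      have h1x : (1:ℝ) - x ≠ 0 := by linarith
      have hux : -x / (1 - x) < 1 := by
        have : -x / (1 - x) ≤ 0 := div_nonpos_of_nonpos_of_nonneg (by linarith [hx.1]) (by linarith)
        linarith
      have hu : HasDerivAt (fun t : ℝ => -t / (1 - t)) ((-1) / (1 - x) ^ 2) x := by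
        simpa using aux_hasDerivAt 0 (-1) x (by linarith)
      have c1 : ContinuousAt (fun t : ℝ => Li2 (-t / (1 - t))) x :=
        (HasDerivAt.comp (h₂ := Li2) x (Li2_hasDerivAt hux) hu).continuousAt
      have c2 : ContinuousAt Li2 x := (Li2_hasDerivAt h1).continuousAt
      have c3 : ContinuousAt (fun t : ℝ => (1/2) * (Real.log (1 - t)) ^ 2) x :=
        (logsq_hasDerivAt h1).continuousAt
      exact ((c1.add c2).add c3).continuousWithinAt
  have := constant_of_has_deriv_right_zero hcont
    (fun x hx => (hderiv x hx).hasDerivWithinAt) z (Set.right_mem_Icc.mpr h0)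
  have hG0 : G 0 = 0 := by simp [hG, Li2_zero]
  rw [hG0] at this
  simpa [hG] using this
/-- the five term relation for dilogarithms — for real 0 < z₁, z₂ < 1,
Li_2(z₁z₂) = Li_2(−z₁(1−z₂)/(1−z₁)) + Li_2(−z₂(1−z₁)/(1−z₂)) + Li_2(z₁) + Li_2(z₂)
+ (1/2)·log²((1−z₁)/(1−z₂)). -/
theorem five_term_relation (z1 z2 : ℝ)
    (h10 : 0 < z1) (h11 : z1 < 1) (h20 : 0 < z2) (h21 : z2 < 1) :
    Li2 (z1 * z2)
      = Li2 (-z1 * (1 - z2) / (1 - z1)) + Li2 (-z2 * (1 - z1) / (1 - z2))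
        + Li2 z1 + Li2 z2
        + (1 / 2) * (Real.log ((1 - z1) / (1 - z2))) ^ 2 := by
  have h2 : (0:ℝ) < 1 - z2 := by linarith
  set H : ℝ → ℝ := fun t => Li2 (t * z2)
      - (Li2 (-t * (1 - z2) / (1 - t)) + Li2 (-z2 * (1 - t) / (1 - z2)) + Li2 t + Li2 z2
        + (1 / 2) * (Real.log ((1 - t) / (1 - z2))) ^ 2) with hH
  have hD : ∀ x : ℝ, 0 ≤ x → x < 1 → HasDerivAt H 0 x := by
    intro x hx0 hx1
    have h1x : (0:ℝ) < 1 - x := by linarith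
    have hxz2 : x * z2 < 1 := by nlinarith
    -- the three inner maps
    have hm : HasDerivAt (fun t : ℝ => t * z2) z2 x := by
      simpa using (hasDerivAt_id x).mul_const z2
    have hψ : HasDerivAt (fun t : ℝ => -t * (1 - z2) / (1 - t)) (-(1 - z2) / (1 - x) ^ 2) x := by
      have h := aux_hasDerivAt 0 (-(1 - z2)) x (by linarith)
      have e : (fun t : ℝ => (0 + -(1 - z2) * t) / (1 - t))
          = fun t : ℝ => -t * (1 - z2) / (1 - t) := by funext t; ring_nf
      rw [e] at h
      convert h using 1
      ring
    have hφ : HasDerivAt (fun t : ℝ => -z2 * (1 - t) / (1 - z2)) (z2 / (1 - z2)) x := by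
      have h : HasDerivAt (fun t : ℝ => (-z2 / (1 - z2)) * (1 - t)) ((-z2 / (1 - z2)) * (-1)) x := by
        exact ((hasDerivAt_id x).const_sub 1).const_mul _
      have e : (fun t : ℝ => (-z2 / (1 - z2)) * (1 - t))
          = fun t : ℝ => -z2 * (1 - t) / (1 - z2) := by funext t; ring
      rw [e] at h
      convert h using 1
      field_simp
    -- log term
    have hlt : HasDerivAt (fun t : ℝ => (1 / 2) * (Real.log ((1 - t) / (1 - z2))) ^ 2)
        ((Real.log (1 - x) - Real.log (1 - z2)) * (-1 / (1 - x))) x := by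
      have hd : HasDerivAt (fun t : ℝ => 1 - t) (-1) x := by
        simpa using (hasDerivAt_id x).const_sub 1
      have hlog : HasDerivAt (fun t : ℝ => Real.log (1 - t)) (-1 / (1 - x)) x := by
        have := (Real.hasDerivAt_log (ne_of_gt h1x)).comp x hd
        simpa [div_eq_inv_mul, Function.comp_def] using this
      have h := ((hlog.sub_const (Real.log (1 - z2))).pow 2).const_mul (1/2 : ℝ)
      have hev : (fun t : ℝ => (1 / 2) * (Real.log ((1 - t) / (1 - z2))) ^ 2)
          =ᶠ[nhds x] fun t : ℝ => (1 / 2) * (Real.log (1 - t) - Real.log (1 - z2)) ^ 2 := by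
        filter_upwards [isOpen_Iio.mem_nhds (show x ∈ Iio 1 from hx1)] with t ht
        rw [Real.log_div (by simp only [Set.mem_Iio] at ht; intro h; linarith) (ne_of_gt h2)]
      rw [hev.hasDerivAt_iff]
      refine h.congr_deriv ?_
      ring
    -- values of the inner maps
    have hψx1 : -x * (1 - z2) / (1 - x) < 1 := by
      have : -x * (1 - z2) / (1 - x) ≤ 0 :=
        div_nonpos_of_nonpos_of_nonneg (by nlinarith) (by linarith)
      linarith
    have hφx1 : -z2 * (1 - x) / (1 - z2) < 1 := by
      have : -z2 * (1 - x) / (1 - z2) ≤ 0 :=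
        div_nonpos_of_nonpos_of_nonneg (by nlinarith) (by linarith)
      linarith
    have hφne : -z2 * (1 - x) / (1 - z2) ≠ 0 := by
      apply div_ne_zero _ (ne_of_gt h2)
      have : 0 < z2 * (1 - x) := by positivity
      intro h; nlinarith
    have hφarg : (1:ℝ) - (-z2 * (1 - x) / (1 - z2)) = (1 - x * z2) / (1 - z2) := by
      field_simp; ring
    have hLφ : HasDerivAt (fun t : ℝ => Li2 (-z2 * (1 - t) / (1 - z2)))
        ((-Real.log (1 - (-z2 * (1 - x) / (1 - z2))) / (-z2 * (1 - x) / (1 - z2))) * (z2 / (1 - z2))) x :=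
      HasDerivAt.comp (h₂ := Li2) x (Li2_hasDerivAt_ne hφx1 hφne) hφ
    rcases eq_or_lt_of_le hx0 with rfl | hx0'
    · -- x = 0
      have hm0 : HasDerivAt (fun t : ℝ => Li2 (t * z2)) (1 * z2) 0 := by
        have h0 : ((0:ℝ) * z2) = 0 := by ring
        exact HasDerivAt.comp (h₂ := Li2) 0 (by rw [h0]; exact Li2_hasDerivAt_zero : HasDerivAt Li2 1 ((0:ℝ) * z2)) hm
      have hψ0 : HasDerivAt (fun t : ℝ => Li2 (-t * (1 - z2) / (1 - t)))
          (1 * (-(1 - z2) / (1 - 0) ^ 2)) 0 := by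
        have h0 : (-(0:ℝ) * (1 - z2) / (1 - 0)) = 0 := by norm_num
        exact HasDerivAt.comp (h₂ := Li2) 0 (by rw [h0]; exact Li2_hasDerivAt_zero : HasDerivAt Li2 1 (-(0:ℝ) * (1 - z2) / (1 - 0))) hψ
      have htot := hm0.sub ((((hψ0.add hLφ).add Li2_hasDerivAt_zero).add (hasDerivAt_const 0 (Li2 z2))).add hlt)
      refine htot.congr_deriv ?_
      rw [hφarg]
      rw [show ((1:ℝ) - 0 * z2) / (1 - z2) = (1 - z2)⁻¹ by norm_num, Real.log_inv]
      norm_num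
      field_simp
      ring
    · -- x > 0
      have hmne : x * z2 ≠ 0 := by positivity
      have hψne : -x * (1 - z2) / (1 - x) ≠ 0 := by
        apply div_ne_zero _ (ne_of_gt h1x)
        have : 0 < x * (1 - z2) := by positivity
        intro h; nlinarith
      have hψarg : (1:ℝ) - (-x * (1 - z2) / (1 - x)) = (1 - x * z2) / (1 - x) := by
        field_simp; ring
      have hLm : HasDerivAt (fun t : ℝ => Li2 (t * z2))
          ((-Real.log (1 - x * z2) / (x * z2)) * z2) x :=
        HasDerivAt.comp (h₂ := Li2) x (Li2_hasDerivAt_ne hxz2 hmne) hm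
      have hLψ : HasDerivAt (fun t : ℝ => Li2 (-t * (1 - z2) / (1 - t)))
          ((-Real.log (1 - (-x * (1 - z2) / (1 - x))) / (-x * (1 - z2) / (1 - x))) * (-(1 - z2) / (1 - x) ^ 2)) x :=
        HasDerivAt.comp (h₂ := Li2) x (Li2_hasDerivAt_ne hψx1 hψne) hψ
      have htot := hLm.sub ((((hLψ.add hLφ).add (Li2_hasDerivAt_ne hx1 (ne_of_gt hx0'))).add
        (hasDerivAt_const x (Li2 z2))).add hlt)
      refine htot.congr_deriv ?_
      have hxz2' : (0:ℝ) < 1 - x * z2 := by linarith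
      rw [hψarg, hφarg, Real.log_div (ne_of_gt hxz2') (ne_of_gt h1x),
        Real.log_div (ne_of_gt hxz2') (ne_of_gt h2)]
      field_simp
      ring
  have hcont : ContinuousOn H (Set.Icc 0 z1) := fun x hx =>
    (hD x hx.1 (lt_of_le_of_lt hx.2 h11)).continuousAt.continuousWithinAt
  have hconst := constant_of_has_deriv_right_zero hcont
    (fun x hx => (hD x hx.1 (lt_of_lt_of_le hx.2 h11.le)).hasDerivWithinAt) z1
    (Set.right_mem_Icc.mpr h10.le)
  have hH0 : H 0 = 0 := by
    have e1 : (-(0:ℝ) * (1 - z2) / (1 - 0)) = 0 := by norm_num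
    have e2 : (-z2 * (1 - (0:ℝ)) / (1 - z2)) = -z2 / (1 - z2) := by ring
    have e3 : ((1:ℝ) - 0) / (1 - z2) = (1 - z2)⁻¹ := by norm_num
    have hl := landen h20.le h21
    simp only [hH, zero_mul, e1, e2, e3, Li2_zero, Real.log_inv]
    nlinarith [hl]
  rw [hH0] at hconst
  have := hconst
  simp only [hH] at this
  linarith
end
end
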